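/- Structure of the excursion-weight function: Let V be a finite index set with at least 2 elements and A an irreducible Metzler real matrix indexed by V with A_{σ,σ} ≤ 0 for all σ. Fix σ ∈ V and define F : (0,∞) → [0,∞] by F(α) := f(α)_{σ→σ}, the tsum over all excursions σ = σ₁, …, σ_ℓ = σ (ℓ ≥ 2, σ_i ≠ σ for 1 < i < ℓ) of ∏_{i=1}^{ℓ−1} A_{σ_{i+1},σ_i}/(α − A_{σ_i,σ_i}). Then: (i) F is antitone on (0,∞); (ii) there exists α₀ ∈ [0,∞] such that for every α > 0, F(α) = ∞ if and only if α ≤ α₀; (iii) on the set {α > 0 : F(α) < ∞}, F is real-valued, strictly decreasing, and continuous. -/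

import Mathlib

open scoped ENNReal

/-- The weight of a finite path, as the product (in `[0,∞]`) of the
`ENNReal.ofReal`-weights of its consecutive pairs. The empty product is `1`. -/
noncomputable def pathWeight {V : Type*} (w : V → V → ℝ) : List V → ℝ≥0∞
  | [] => 1
  | [_] => 1
  | a :: b :: l => ENNReal.ofReal (w a b) * pathWeight w (b :: l)

/-- `l` is an excursion from `σ` to `σ`: a walk of length `≥ 2` starting and
ending at `σ` whose intermediate vertices are all different from `σ`. -/
def IsExcursion {V : Type*} (σ : V) (l : List V) : Prop :=
  2 ≤ l.length ∧ l.head? = some σ ∧ l.getLast? = some σ ∧ ∀ x ∈ l.tail.dropLast, x ≠ σ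

/-- The total weight `f(α)_{σ→σ}` of all excursions from `σ` to `σ`, with
transition weights `w(α)_{x→y} = A_{y,x}/(α − A_{x,x})`. -/
noncomputable def excursionWeight {V : Type*} (A : Matrix V V ℝ) (α : ℝ) (σ : V) : ℝ≥0∞ :=
  ∑' l : {l : List V // IsExcursion σ l},
    pathWeight (fun x y => A y x / (α - A x x)) l.1

/-- `A` is a Metzler matrix: all off-diagonal entries are nonnegative. -/
def Matrix.IsMetzler {V : Type*} (A : Matrix V V ℝ) : Prop :=
  ∀ σ σ' : V, σ ≠ σ' → 0 ≤ A σ' σ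

/-- `A` is irreducible: any two distinct indices are connected by a chain of
strictly positive transition entries. -/
def Matrix.IsIrreducibleMetzlerChain {V : Type*} (A : Matrix V V ℝ) : Prop :=
  ∀ σ σ' : V, σ ≠ σ' → Relation.TransGen (fun x y => x ≠ y ∧ 0 < A y x) σ σ'


namespace ExcAux

noncomputable def pw {V : Type*} (ω : V → V → ℝ≥0∞) : List V → ℝ≥0∞
  | [] => 1
  | [_] => 1
  | a :: b :: l => ω a b * pw ω (b :: l)

variable {V : Type*} {ω ω' : V → V → ℝ≥0∞}

@[simp] lemma pw_nil : pw ω [] = 1 := rfl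
@[simp] lemma pw_single (a : V) : pw ω [a] = 1 := rfl
@[simp] lemma pw_cons_cons (a b : V) (l : List V) :
    pw ω (a :: b :: l) = ω a b * pw ω (b :: l) := rfl

lemma pathWeight_eq_pw (w : V → V → ℝ) (l : List V) :
    pathWeight w l = pw (fun a b => ENNReal.ofReal (w a b)) l := by
  induction l with
  | nil => rfl
  | cons a l ih =>
    cases l with
    | nil => rfl
    | cons b t => rw [pathWeight, pw, ← ih]

lemma pw_append (l₁ : List V) (x : V) (l₂ : List V) :
    pw ω (l₁ ++ x :: l₂) = pw ω (l₁ ++ [x]) * pw ω (x :: l₂) := by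
  induction l₁ with
  | nil => simp
  | cons a t ih =>
    cases t with
    | nil => simp [mul_assoc]
    | cons c t' => simp only [List.cons_append, pw_cons_cons] at ih ⊢; rw [ih, mul_assoc]

lemma pw_mono (h : ∀ a b, ω a b ≤ ω' a b) (l : List V) : pw ω l ≤ pw ω' l := by
  induction l with
  | nil => exact le_rfl
  | cons a l ih =>
    cases l with
    | nil => exact le_rfl
    | cons b t => exact mul_le_mul' (h a b) ih

lemma pw_smul (c : ℝ≥0∞) (l : List V) :
    pw (fun a b => c * ω a b) l = c ^ (l.length - 1) * pw ω l := by
  induction l with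
  | nil => simp
  | cons a l ih =>
    cases l with
    | nil => simp
    | cons b t =>
      simp only [pw_cons_cons] at ih ⊢
      rw [ih]
      simp only [List.length_cons, Nat.add_sub_cancel]
      ring

lemma pw_ne_top (h : ∀ a b, ω a b ≠ ∞) (l : List V) : pw ω l ≠ ∞ := by
  induction l with
  | nil => simp
  | cons a l ih =>
    cases l with
    | nil => simp
    | cons b t => exact ENNReal.mul_ne_top (h a b) ih


section Defs
variable (A : Matrix V V ℝ) (σ : V) (α : ℝ)

noncomputable def tw : V → V → ℝ≥0∞ := fun x y => ENNReal.ofReal (A y x / (α - A x x))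

noncomputable def exw (m : List {x : V // x ≠ σ}) : ℝ≥0∞ :=
  pw (tw A α) (σ :: m.map Subtype.val ++ [σ])

noncomputable def G : ℝ≥0∞ := ∑' m : List {x : V // x ≠ σ}, exw A σ α m

end Defs

lemma toExc_isExcursion (σ : V) (m : List {x : V // x ≠ σ}) :
    IsExcursion σ (σ :: m.map Subtype.val ++ [σ]) := by
  refine ⟨by simp, by simp, ?_, ?_⟩
  · rw [show σ :: m.map Subtype.val ++ [σ] = (σ :: m.map Subtype.val) ++ [σ] from rfl,
      List.getLast?_concat]
  · intro x hx
    simp only [List.cons_append, List.tail_cons, List.dropLast_concat, List.mem_map] at hx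
    obtain ⟨y, -, rfl⟩ := hx
    exact y.2

noncomputable def toExcEquiv (σ : V) : List {x : V // x ≠ σ} ≃ {l : List V // IsExcursion σ l} := by
  refine Equiv.ofBijective
    (fun m => ⟨σ :: m.map Subtype.val ++ [σ], toExc_isExcursion σ m⟩) ⟨?_, ?_⟩
  · intro m m' h
    have h2 : m.map Subtype.val ++ [σ] = m'.map Subtype.val ++ [σ] := by
      simpa using h
    rw [List.append_left_inj] at h2
    exact List.map_injective_iff.2 Subtype.val_injective h2
  · rintro ⟨l, h2, hh, hl, hi⟩
    obtain ⟨a, b, t, rfl⟩ : ∃ a b t, l = a :: b :: t := by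
      match l, h2 with
      | a :: b :: t, _ => exact ⟨a, b, t, rfl⟩
    have ha : a = σ := by simpa using hh
    have hsne : (b :: t : List V) ≠ [] := by simp
    have hlast : (b :: t).getLast hsne = σ := by
      have h5 : (b :: t).getLast? = some σ := by
        rw [← hl, List.getLast?_cons_cons]
      rwa [List.getLast?_eq_getLast hsne, Option.some.injEq] at h5
    have hmem : ∀ x ∈ (b :: t).dropLast, x ≠ σ := by
      intro x hx
      exact hi x (by simpa using hx)
    refine ⟨(b :: t).dropLast.attach.map (fun x => ⟨x.1, hmem x.1 x.2⟩), ?_⟩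
    simp only [Subtype.mk.injEq, ha, List.cons.injEq, true_and, List.map_map]
    have h6 : List.map (Subtype.val ∘ fun x : {y // y ∈ (b :: t).dropLast} =>
        (⟨x.1, hmem x.1 x.2⟩ : {y : V // y ≠ σ})) (b :: t).dropLast.attach
        = (b :: t).dropLast := by
      simpa using List.attach_map_coe (b :: t).dropLast (fun x => x)
    rw [h6]
    conv_rhs => rw [← List.dropLast_append_getLast hsne]
    rw [hlast]
    simp

lemma excursionWeight_eq_G (A : Matrix V V ℝ) (σ : V) (α : ℝ) :
    excursionWeight A α σ = G A σ α := by
  rw [excursionWeight, G]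
  rw [← (toExcEquiv σ).tsum_eq (fun l => pathWeight (fun x y => A y x / (α - A x x)) l.1)]
  refine tsum_congr fun m => ?_
  rw [pathWeight_eq_pw]
  rfl

section Facts

variable {A : Matrix V V ℝ} {σ : V}

lemma tw_diag (hd : ∀ x, A x x ≤ 0) {α : ℝ} (hα : 0 < α) (x : V) : tw A α x x = 0 := by
  have h1 : A x x / (α - A x x) ≤ 0 :=
    div_nonpos_of_nonpos_of_nonneg (hd x) (by linarith [hd x])
  simpa [tw] using ENNReal.ofReal_eq_zero.2 h1

lemma tw_ne_top (A : Matrix V V ℝ) (α : ℝ) (x y : V) : tw A α x y ≠ ∞ :=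
  ENNReal.ofReal_ne_top

lemma tw_anti (hM : A.IsMetzler) (hd : ∀ x, A x x ≤ 0) {β γ : ℝ} (hβ : 0 < β) (hβγ : β ≤ γ)
    (x y : V) : tw A γ x y ≤ tw A β x y := by
  rcases eq_or_ne x y with rfl | hxy
  · rw [tw_diag hd (lt_of_lt_of_le hβ hβγ)]
    exact zero_le
  · have hc : 0 ≤ A y x := hM x y hxy
    have h1 : 0 < β - A x x := by linarith [hd x]
    refine ENNReal.ofReal_le_ofReal ?_
    gcongr
    all_goals linarith

lemma tw_scale (hM : A.IsMetzler) (hd : ∀ x, A x x ≤ 0) {β γ : ℝ} (hβ : 0 < β) (hβγ : β ≤ γ)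
    (x y : V) : tw A β x y ≤ ENNReal.ofReal (γ / β) * tw A γ x y := by
  rcases eq_or_ne x y with rfl | hxy
  · rw [tw_diag hd hβ]
    exact zero_le
  · have hc : 0 ≤ A y x := hM x y hxy
    have hdx : A x x ≤ 0 := hd x
    have h1 : 0 < β - A x x := by linarith
    have h2 : 0 < γ - A x x := by linarith
    rw [tw, tw, ← ENNReal.ofReal_mul (div_nonneg (by linarith) hβ.le)]
    refine ENNReal.ofReal_le_ofReal ?_
    rw [div_mul_div_comm, div_le_div_iff₀ h1 (by positivity)]
    nlinarith [mul_nonneg (mul_nonneg hc (neg_nonneg.2 hdx)) (sub_nonneg.2 hβγ)]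

lemma tw_strict (hM : A.IsMetzler) (hd : ∀ x, A x x ≤ 0) {a b d₀ : ℝ} (ha : 0 < a)
    (hab : a ≤ b) (hd₀ : ∀ x, d₀ ≤ A x x) (x y : V) :
    ENNReal.ofReal ((b - d₀) / (a - d₀)) * tw A b x y ≤ tw A a x y := by
  have hd₀0 : d₀ ≤ 0 := le_trans (hd₀ x) (hd x)
  rcases eq_or_ne x y with rfl | hxy
  · rw [tw_diag hd (lt_of_lt_of_le ha hab), mul_zero]
    exact zero_le
  · have hc : 0 ≤ A y x := hM x y hxy
    have hdx : A x x ≤ 0 := hd x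
    have hdd : d₀ ≤ A x x := hd₀ x
    have h1 : 0 < a - A x x := by linarith
    have h2 : 0 < b - A x x := by linarith
    have h3 : 0 < a - d₀ := by linarith
    have h4 : 0 < b - d₀ := by linarith
    rw [tw, tw, ← ENNReal.ofReal_mul (by positivity)]
    refine ENNReal.ofReal_le_ofReal ?_
    rw [div_mul_div_comm, div_le_div_iff₀ (by positivity) h1]
    nlinarith [mul_nonneg (mul_nonneg hc (sub_nonneg.2 hab)) (sub_nonneg.2 hdd)]

end Facts

section GFacts
variable {A : Matrix V V ℝ} {σ : V}

lemma exw_anti (hM : A.IsMetzler) (hd : ∀ x, A x x ≤ 0) {β γ : ℝ} (hβ : 0 < β) (hβγ : β ≤ γ)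
    (m : List {x : V // x ≠ σ}) : exw A σ γ m ≤ exw A σ β m :=
  pw_mono (tw_anti hM hd hβ hβγ) _

lemma G_anti (hM : A.IsMetzler) (hd : ∀ x, A x x ≤ 0) {β γ : ℝ} (hβ : 0 < β) (hβγ : β ≤ γ) :
    G A σ γ ≤ G A σ β :=
  ENNReal.tsum_le_tsum fun m => exw_anti hM hd hβ hβγ m

lemma exw_scale (hM : A.IsMetzler) (hd : ∀ x, A x x ≤ 0) {β γ : ℝ} (hβ : 0 < β) (hβγ : β ≤ γ)
    (m : List {x : V // x ≠ σ}) :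
    exw A σ β m ≤ ENNReal.ofReal (γ / β) ^ (m.length + 1) * exw A σ γ m := by
  have h1 : exw A σ β m ≤ pw (fun x y => ENNReal.ofReal (γ / β) * tw A γ x y)
      (σ :: m.map Subtype.val ++ [σ]) :=
    pw_mono (tw_scale hM hd hβ hβγ) _
  rw [pw_smul] at h1
  have h2 : (σ :: m.map Subtype.val ++ [σ]).length - 1 = m.length + 1 := by simp
  rw [h2] at h1
  exact h1

lemma exw_strict (hM : A.IsMetzler) (hd : ∀ x, A x x ≤ 0) {a b d₀ : ℝ} (ha : 0 < a)
    (hab : a ≤ b) (hd₀ : ∀ x, d₀ ≤ A x x) (m : List {x : V // x ≠ σ}) :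
    ENNReal.ofReal ((b - d₀) / (a - d₀)) * exw A σ b m ≤ exw A σ a m := by
  have hd₀0 : d₀ ≤ 0 := le_trans (hd₀ σ) (hd σ)
  have hk1 : 1 ≤ ENNReal.ofReal ((b - d₀) / (a - d₀)) := by
    rw [ENNReal.one_le_ofReal]
    rw [le_div_iff₀ (by linarith)]
    linarith
  have h1 : pw (fun x y => ENNReal.ofReal ((b - d₀) / (a - d₀)) * tw A b x y)
      (σ :: m.map Subtype.val ++ [σ]) ≤ exw A σ a m :=
    pw_mono (tw_strict hM hd ha hab hd₀) _
  rw [pw_smul] at h1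
  refine le_trans ?_ h1
  have h2 : (σ :: m.map Subtype.val ++ [σ]).length - 1 = m.length + 1 := by simp
  rw [h2]
  exact mul_le_mul_left (le_self_pow₀ hk1 (Nat.succ_ne_zero _)) _

lemma G_strict (hM : A.IsMetzler) (hd : ∀ x, A x x ≤ 0) {a b d₀ : ℝ} (ha : 0 < a)
    (hab : a ≤ b) (hd₀ : ∀ x, d₀ ≤ A x x) :
    ENNReal.ofReal ((b - d₀) / (a - d₀)) * G A σ b ≤ G A σ a := by
  rw [G, ← ENNReal.tsum_mul_left]
  exact ENNReal.tsum_le_tsum fun m => exw_strict hM hd ha hab hd₀ m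

lemma tw_pos (hd : ∀ x, A x x ≤ 0) {α : ℝ} (hα : 0 < α) {x y : V} (h : 0 < A y x) :
    0 < tw A α x y :=
  ENNReal.ofReal_pos.2 (div_pos h (by linarith [hd x]))

lemma pos_path_from (hd : ∀ x, A x x ≤ 0) {α : ℝ} (hα : 0 < α) {x : V}
    (h : Relation.TransGen (fun x y => x ≠ y ∧ 0 < A y x) σ x) (hx : x ≠ σ) :
    ∃ u : List {z : V // z ≠ σ}, 0 < pw (tw A α) (σ :: u.map Subtype.val ++ [x]) := by
  have base : ∀ {c : V}, 0 < A c σ → ∃ u : List {z : V // z ≠ σ},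
      0 < pw (tw A α) (σ :: u.map Subtype.val ++ [c]) := by
    intro c hc
    refine ⟨[], ?_⟩
    simpa using tw_pos hd hα hc
  revert hx
  induction h with
  | single h1 => exact fun _ => base h1.2
  | @tail b c hst hbc ih =>
    intro hc
    by_cases hb : b = σ
    · subst hb
      exact base hbc.2
    · obtain ⟨u, hu⟩ := ih hb
      refine ⟨u ++ [⟨b, hb⟩], ?_⟩
      have hl : σ :: List.map Subtype.val (u ++ [⟨b, hb⟩]) ++ [c]
          = (σ :: List.map Subtype.val u) ++ b :: [c] := by simp
      rw [hl, pw_append]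
      have h2 : (σ :: List.map Subtype.val u) ++ [b] = σ :: List.map Subtype.val u ++ [b] := by
        simp
      rw [h2]
      exact ENNReal.mul_pos (ne_of_gt hu)
        (ne_of_gt (by simpa using tw_pos hd hα hbc.2))

lemma pos_path_to (hd : ∀ x, A x x ≤ 0) {α : ℝ} (hα : 0 < α) {y : V}
    (h : Relation.TransGen (fun x y => x ≠ y ∧ 0 < A y x) y σ) (hy : y ≠ σ) :
    ∃ v : List {z : V // z ≠ σ}, 0 < pw (tw A α) (y :: v.map Subtype.val ++ [σ]) := by
  revert hy
  induction h using Relation.TransGen.head_induction_on with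
  | single h1 =>
    exact fun _ => ⟨[], by simpa using tw_pos hd hα h1.2⟩
  | head h1 h2 ih =>
    rename_i a c
    intro ha
    by_cases hc : c = σ
    · subst hc
      exact ⟨[], by simpa using tw_pos hd hα h1.2⟩
    · obtain ⟨v, hv⟩ := ih hc
      refine ⟨⟨c, hc⟩ :: v, ?_⟩
      have hl : a :: List.map Subtype.val (⟨c, hc⟩ :: v) ++ [σ]
          = a :: (c :: (List.map Subtype.val v ++ [σ])) := by simp
      rw [hl, pw_cons_cons]
      exact ENNReal.mul_pos (ne_of_gt (tw_pos hd hα h1.2)) (ne_of_gt hv)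

lemma G_pos [Nontrivial V] (hd : ∀ x, A x x ≤ 0) (hirr : A.IsIrreducibleMetzlerChain)
    {α : ℝ} (hα : 0 < α) : 0 < G A σ α := by
  obtain ⟨τ, hτ⟩ := exists_ne σ
  obtain ⟨u, hu⟩ := pos_path_from hd hα (hirr σ τ (Ne.symm hτ)) hτ
  obtain ⟨v, hv⟩ := pos_path_to hd hα (hirr τ σ hτ) hτ
  have key : 0 < exw A σ α (u ++ ⟨τ, hτ⟩ :: v) := by
    rw [exw]
    have hl : σ :: List.map Subtype.val (u ++ ⟨τ, hτ⟩ :: v) ++ [σ]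
        = (σ :: List.map Subtype.val u) ++ τ :: (List.map Subtype.val v ++ [σ]) := by simp
    rw [hl, pw_append]
    have h2 : (σ :: List.map Subtype.val u) ++ [τ] = σ :: List.map Subtype.val u ++ [τ] := by
      simp
    rw [h2]
    exact ENNReal.mul_pos (ne_of_gt hu) (ne_of_gt (by simpa using hv))
  exact lt_of_lt_of_le key (ENNReal.le_tsum _)

end GFacts

section Closed
variable [Fintype V] [DecidableEq V] {A : Matrix V V ℝ} {σ : V}

/-- weight of a `σ`-avoiding path from `x` to `y` with interior `m` -/
noncomputable def Pp (A : Matrix V V ℝ) (α : ℝ) {σ : V} (x : {z : V // z ≠ σ})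
    (m : List {z : V // z ≠ σ}) (y : {z : V // z ≠ σ}) : ℝ≥0∞ :=
  pw (tw A α) (x.1 :: m.map Subtype.val ++ [y.1])

/-- total weight of `σ`-avoiding paths from `x` to `y` with interior length `n` -/
noncomputable def Sn (A : Matrix V V ℝ) (α : ℝ) {σ : V} (n : ℕ)
    (x y : {z : V // z ≠ σ}) : ℝ≥0∞ :=
  ∑' m : {m : List {z : V // z ≠ σ} // m.length = n}, Pp A α x m.1 y

noncomputable def sbb (A : Matrix V V ℝ) (α : ℝ) (σ : V) (n : ℕ) : ℝ≥0∞ :=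
  ∑' x : {z : V // z ≠ σ}, ∑' y : {z : V // z ≠ σ}, Sn A α n x y

lemma Pp_split (α : ℝ) (x y z : {z : V // z ≠ σ}) (m₁ m₂ : List {z : V // z ≠ σ}) :
    Pp A α x (m₁ ++ z :: m₂) y = Pp A α x m₁ z * Pp A α z m₂ y := by
  have hl : x.1 :: (m₁ ++ z :: m₂).map Subtype.val ++ [y.1]
      = (x.1 :: m₁.map Subtype.val) ++ z.1 :: (m₂.map Subtype.val ++ [y.1]) := by simp
  rw [Pp, hl, pw_append]
  rfl

lemma Pp_tsum_eq (α : ℝ) (x y : {z : V // z ≠ σ}) :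
    ∑' m : List {z : V // z ≠ σ}, Pp A α x m y = ∑' n, Sn A α n x y := by
  rw [← (Equiv.sigmaFiberEquiv (List.length
      (α := {z : V // z ≠ σ}))).tsum_eq (fun m => Pp A α x m y)]
  exact ENNReal.tsum_sigma' _

lemma Sn_le_tsum (α : ℝ) (n : ℕ) (x y : {z : V // z ≠ σ}) :
    Sn A α n x y ≤ ∑' m : List {z : V // z ≠ σ}, Pp A α x m y := by
  rw [Pp_tsum_eq]
  exact ENNReal.le_tsum n

lemma list_decomp {γ : Type*} (l : List γ) (h0 : l ≠ []) (h1 : l.tail ≠ []) :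
    l = l.head h0 :: (l.tail.dropLast ++ [l.getLast h0]) := by
  cases l with
  | nil => exact absurd rfl h0
  | cons a t =>
    simp only [List.head_cons, List.tail_cons] at h1 ⊢
    rw [List.getLast_cons h1, List.dropLast_append_getLast h1]

lemma Sn_split (α : ℝ) (a b : ℕ) (x y : {z : V // z ≠ σ}) :
    Sn A α (a + b + 1) x y ≤ ∑' z : {z : V // z ≠ σ}, Sn A α a x z * Sn A α b z y := by
  classical
  have key : Sn A α (a + b + 1) x y ≤
      ∑' q : {z : V // z ≠ σ} × {m : List {z : V // z ≠ σ} // m.length = a}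
        × {m : List {z : V // z ≠ σ} // m.length = b},
        Pp A α x q.2.1.1 q.1 * Pp A α q.1 q.2.2.1 y := by
    refine ENNReal.summable.tsum_le_tsum_of_inj
      (fun m => (m.1.get ⟨a, by rw [m.2]; omega⟩,
        ⟨m.1.take a, by rw [List.length_take, m.2]; omega⟩,
        ⟨m.1.drop (a + 1), by rw [List.length_drop, m.2]; omega⟩))
      ?_ (fun _ _ => zero_le) ?_ ENNReal.summable
    · intro m m' h
      simp only [Prod.mk.injEq, Subtype.mk.injEq] at h
      have hm : m.1 = m.1.take a ++ m.1.get ⟨a, by rw [m.2]; omega⟩ :: m.1.drop (a + 1) := by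
        conv_lhs => rw [← List.take_append_drop a m.1]
        rw [List.drop_eq_getElem_cons (by rw [m.2]; omega)]
        rfl
      have hm' : m'.1 = m'.1.take a ++ m'.1.get ⟨a, by rw [m'.2]; omega⟩
          :: m'.1.drop (a + 1) := by
        conv_lhs => rw [← List.take_append_drop a m'.1]
        rw [List.drop_eq_getElem_cons (by rw [m'.2]; omega)]
        rfl
      apply Subtype.ext
      rw [hm, hm', h.1, h.2.1, h.2.2]
    · intro m
      have hm : m.1 = m.1.take a ++ m.1.get ⟨a, by rw [m.2]; omega⟩ :: m.1.drop (a + 1) := by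
        conv_lhs => rw [← List.take_append_drop a m.1]
        rw [List.drop_eq_getElem_cons (by rw [m.2]; omega)]
        rfl
      conv_lhs => rw [hm]
      rw [Pp_split]
  refine le_trans key (le_of_eq ?_)
  rw [ENNReal.tsum_prod']
  refine tsum_congr fun z => ?_
  rw [ENNReal.tsum_prod']
  rw [Sn, ← ENNReal.tsum_mul_right]
  refine tsum_congr fun m₁ => ?_
  rw [Sn, ← ENNReal.tsum_mul_left]

lemma sbb_split (α : ℝ) (a b : ℕ) :
    sbb A α σ (a + b + 1) ≤ (Fintype.card {z : V // z ≠ σ} : ℝ≥0∞) * (sbb A α σ a * sbb A α σ b) := by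
  have h1 : sbb A α σ (a + b + 1) ≤
      ∑' (x : {z : V // z ≠ σ}) (y : {z : V // z ≠ σ}) (z : {z : V // z ≠ σ}),
        Sn A α a x z * Sn A α b z y :=
    ENNReal.tsum_le_tsum fun x => ENNReal.tsum_le_tsum fun y => Sn_split α a b x y
  have h2 : ∑' (x : {z : V // z ≠ σ}) (y : {z : V // z ≠ σ}) (z : {z : V // z ≠ σ}),
      Sn A α a x z * Sn A α b z y
      = ∑' (z : {z : V // z ≠ σ}), (∑' x, Sn A α a x z) * (∑' y, Sn A α b z y) := by
    calc ∑' (x : {z : V // z ≠ σ}) (y : {z : V // z ≠ σ}) (z : {z : V // z ≠ σ}),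
        Sn A α a x z * Sn A α b z y
        = ∑' (x : {z : V // z ≠ σ}) (z : {z : V // z ≠ σ}) (y : {z : V // z ≠ σ}),
          Sn A α a x z * Sn A α b z y := tsum_congr fun x => ENNReal.tsum_comm
      _ = ∑' (z : {z : V // z ≠ σ}) (x : {z : V // z ≠ σ}) (y : {z : V // z ≠ σ}),
          Sn A α a x z * Sn A α b z y := ENNReal.tsum_comm
      _ = ∑' (z : {z : V // z ≠ σ}), (∑' x, Sn A α a x z) * (∑' y, Sn A α b z y) := by
          refine tsum_congr fun z => ?_
          rw [← ENNReal.tsum_mul_right]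
          exact tsum_congr fun x => ENNReal.tsum_mul_left
  have h3 : ∑' (z : {z : V // z ≠ σ}), (∑' x, Sn A α a x z) * (∑' y, Sn A α b z y)
      ≤ ∑' _ : {z : V // z ≠ σ}, sbb A α σ a * sbb A α σ b := by
    refine ENNReal.tsum_le_tsum fun z => mul_le_mul' ?_ ?_
    · exact ENNReal.tsum_le_tsum fun x => ENNReal.le_tsum z
    · exact ENNReal.le_tsum z
  refine le_trans h1 (le_trans (le_of_eq h2) (le_trans h3 (le_of_eq ?_)))
  rw [tsum_fintype]
  simp [Finset.sum_const, Finset.card_univ, nsmul_eq_mul]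

lemma Pp_tsum_ne_top (hd : ∀ x, A x x ≤ 0) (hirr : A.IsIrreducibleMetzlerChain)
    {α : ℝ} (hα : 0 < α) (hfin : G A σ α ≠ ∞) (x y : {z : V // z ≠ σ}) :
    ∑' m : List {z : V // z ≠ σ}, Pp A α x m y ≠ ∞ := by
  obtain ⟨u, hu⟩ := pos_path_from hd hα (hirr σ x.1 (Ne.symm x.2)) x.2
  obtain ⟨v, hv⟩ := pos_path_to hd hα (hirr y.1 σ y.2) y.2
  set pu := pw (tw A α) (σ :: u.map Subtype.val ++ [x.1]) with hpu
  set pv := pw (tw A α) (y.1 :: v.map Subtype.val ++ [σ]) with hpv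
  have key : ∀ m : List {z : V // z ≠ σ},
      exw A σ α (u ++ x :: (m ++ y :: v)) = pu * (Pp A α x m y * pv) := by
    intro m
    have hl1 : σ :: List.map Subtype.val (u ++ x :: (m ++ y :: v)) ++ [σ]
        = (σ :: List.map Subtype.val u) ++ x.1 ::
          (List.map Subtype.val m ++ y.1 :: (List.map Subtype.val v ++ [σ])) := by simp
    rw [exw, hl1, pw_append]
    have h2 : pw (tw A α) (x.1 :: (List.map Subtype.val m
        ++ y.1 :: (List.map Subtype.val v ++ [σ]))) = Pp A α x m y * pv := by
      rw [show x.1 :: (List.map Subtype.val m ++ y.1 :: (List.map Subtype.val v ++ [σ]))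
        = (x.1 :: List.map Subtype.val m) ++ y.1 :: (List.map Subtype.val v ++ [σ]) from rfl,
        pw_append]
      rfl
    rw [h2]
  have hle : ∑' m : List {z : V // z ≠ σ}, pu * (Pp A α x m y * pv) ≤ G A σ α := by
    refine ENNReal.summable.tsum_le_tsum_of_inj (fun m => u ++ x :: (m ++ y :: v)) ?_
      (fun _ _ => zero_le) (fun m => le_of_eq (key m).symm) ENNReal.summable
    intro m m' h
    simp only at h
    have h1 := List.append_cancel_left h
    simp only [List.cons.injEq, true_and] at h1
    rwa [List.append_left_inj] at h1
  intro htop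
  rw [ENNReal.tsum_mul_left, ENNReal.tsum_mul_right, htop,
    ENNReal.top_mul (ne_of_gt hv), ENNReal.mul_top (ne_of_gt hu)] at hle
  exact hfin (top_le_iff.1 hle)

lemma sbb_tsum_ne_top (hd : ∀ x, A x x ≤ 0) (hirr : A.IsIrreducibleMetzlerChain)
    {α : ℝ} (hα : 0 < α) (hfin : G A σ α ≠ ∞) : ∑' n, sbb A α σ n ≠ ∞ := by
  have h1 : ∑' n, sbb A α σ n
      = ∑' (x : {z : V // z ≠ σ}) (y : {z : V // z ≠ σ}) (n : ℕ), Sn A α n x y := by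
    simp only [sbb]
    rw [ENNReal.tsum_comm (f := fun n x => ∑' y, Sn A α n x y)]
    exact tsum_congr fun x => ENNReal.tsum_comm
  rw [h1]
  have h2 : ∀ x y : {z : V // z ≠ σ}, (∑' n, Sn A α n x y) ≠ ∞ := by
    intro x y
    rw [← Pp_tsum_eq]
    exact Pp_tsum_ne_top hd hirr hα hfin x y
  rw [tsum_fintype]
  refine (ENNReal.sum_lt_top.2 fun x _ => ?_).ne
  rw [tsum_fintype]
  exact ENNReal.sum_lt_top.2 fun y _ => (h2 x y).lt_top

lemma Tn_two_le (α : ℝ) (n : ℕ) (Wb : ℝ≥0∞) (hWble : ∀ a b : V, tw A α a b ≤ Wb) :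
    (∑' m : {m : List {z : V // z ≠ σ} // m.length = n + 2}, exw A σ α m.1)
      ≤ Wb * Wb * sbb A α σ n := by
  classical
  have hne : ∀ m : {m : List {z : V // z ≠ σ} // m.length = n + 2}, m.1 ≠ [] := by
    intro m h
    have h2 := m.2
    rw [h] at h2
    simp at h2
  have hne' : ∀ m : {m : List {z : V // z ≠ σ} // m.length = n + 2}, m.1.tail ≠ [] := by
    intro m h
    have := congrArg List.length h
    rw [List.length_tail, m.2] at this
    simp at this
  have hkey : (∑' m : {m : List {z : V // z ≠ σ} // m.length = n + 2}, exw A σ α m.1)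
      ≤ ∑' q : {z : V // z ≠ σ} × {m : List {z : V // z ≠ σ} // m.length = n}
          × {z : V // z ≠ σ},
        Wb * (Pp A α q.1 q.2.1.1 q.2.2 * Wb) := by
    refine ENNReal.summable.tsum_le_tsum_of_inj
      (fun m => (m.1.head (hne m),
        ⟨m.1.tail.dropLast, by rw [List.length_dropLast, List.length_tail, m.2]; omega⟩,
        m.1.getLast (hne m)))
      ?_ (fun _ _ => zero_le) ?_ ENNReal.summable
    · intro m m' h
      simp only [Prod.mk.injEq, Subtype.mk.injEq] at h
      apply Subtype.ext
      rw [list_decomp m.1 (hne m) (hne' m), list_decomp m'.1 (hne m') (hne' m'),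
        h.1, h.2.1, h.2.2]
    · intro m
      have hdec := list_decomp m.1 (hne m) (hne' m)
      have hsp : exw A σ α m.1 = tw A α σ (m.1.head (hne m)).1 *
          (Pp A α (m.1.head (hne m)) m.1.tail.dropLast (m.1.getLast (hne m))
            * (tw A α (m.1.getLast (hne m)).1 σ * 1)) := by
        conv_lhs => rw [exw, hdec]
        have hl : σ :: List.map Subtype.val ((m.1.head (hne m)) ::
              (m.1.tail.dropLast ++ [m.1.getLast (hne m)])) ++ [σ]
            = σ :: (m.1.head (hne m)).1 ::
              (((m.1.head (hne m)).1 :: List.map Subtype.val m.1.tail.dropLast).tail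
                ++ (m.1.getLast (hne m)).1 :: [σ]) := by simp
        rw [hl, pw_cons_cons]
        congr 1
        rw [show (m.1.head (hne m)).1 ::
            (((m.1.head (hne m)).1 :: List.map Subtype.val m.1.tail.dropLast).tail
              ++ (m.1.getLast (hne m)).1 :: [σ])
          = ((m.1.head (hne m)).1 :: List.map Subtype.val m.1.tail.dropLast)
              ++ (m.1.getLast (hne m)).1 :: [σ] from rfl, pw_append]
        rfl
      rw [hsp]
      refine mul_le_mul' (hWble _ _) (mul_le_mul' le_rfl ?_)
      rw [mul_one]
      exact hWble _ _
  refine le_trans hkey (le_of_eq ?_)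
  have h1 : ∀ q : {z : V // z ≠ σ} × {m : List {z : V // z ≠ σ} // m.length = n}
      × {z : V // z ≠ σ},
      Wb * (Pp A α q.1 q.2.1.1 q.2.2 * Wb) = Wb * Wb * Pp A α q.1 q.2.1.1 q.2.2 := by
    intro q; ring
  rw [tsum_congr h1, ENNReal.tsum_mul_left]
  congr 1
  rw [ENNReal.tsum_prod']
  rw [sbb]
  refine tsum_congr fun x => ?_
  rw [ENNReal.tsum_prod']
  rw [ENNReal.tsum_comm]
  exact tsum_congr fun y => rfl

lemma exists_lt_of_G_ne_top [Nontrivial V] (hM : A.IsMetzler) (hd : ∀ x, A x x ≤ 0)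
    (hirr : A.IsIrreducibleMetzlerChain) {α : ℝ} (hα : 0 < α) (hfin : G A σ α ≠ ∞) :
    ∃ β : ℝ, 0 < β ∧ β < α ∧ G A σ β ≠ ∞ := by
  classical
  set K : ℝ≥0∞ := (Fintype.card {z : V // z ≠ σ} : ℝ≥0∞) with hK
  have hKtop : K + 1 ≠ ∞ := by
    refine ENNReal.add_ne_top.2 ⟨?_, ENNReal.one_ne_top⟩
    exact ENNReal.natCast_ne_top _
  have hsum := sbb_tsum_ne_top hd hirr hα hfin
  set C := ∑' n, sbb A α σ n with hCdef
  have hCle : ∀ j, sbb A α σ j ≤ C := fun j => ENNReal.le_tsum j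
  have htend := ENNReal.tendsto_atTop_zero_of_tsum_ne_top hsum
  have hpos : (0:ℝ≥0∞) < (2 * (K + 1))⁻¹ := by
    rw [ENNReal.inv_pos]
    exact ENNReal.mul_ne_top ENNReal.ofNat_ne_top hKtop
  obtain ⟨n₀, hn₀⟩ := (htend.eventually_lt_const hpos).exists
  have hhalf : K * sbb A α σ n₀ ≤ 2⁻¹ := by
    calc K * sbb A α σ n₀ ≤ (K + 1) * (2 * (K + 1))⁻¹ :=
          mul_le_mul' le_self_add hn₀.le
      _ = 2⁻¹ * ((K + 1) * (K + 1)⁻¹) := by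
          rw [ENNReal.mul_inv (Or.inr hKtop) (Or.inr (by simp))]
          ring
      _ ≤ 2⁻¹ := by
          rw [ENNReal.mul_inv_cancel (by simp) hKtop, mul_one]
  set p := n₀ + 1 with hp
  have hdec : ∀ (k j : ℕ), sbb A α σ (k * p + j) ≤ 2⁻¹ ^ k * sbb A α σ j := by
    intro k
    induction k with
    | zero => simp
    | succ k ih =>
      intro j
      have he : (k + 1) * p + j = n₀ + (k * p + j) + 1 := by rw [hp]; ring
      rw [he]
      calc sbb A α σ (n₀ + (k * p + j) + 1) ≤ K * (sbb A α σ n₀ * sbb A α σ (k * p + j)) :=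
            sbb_split α n₀ (k * p + j)
        _ = (K * sbb A α σ n₀) * sbb A α σ (k * p + j) := by ring
        _ ≤ 2⁻¹ * (2⁻¹ ^ k * sbb A α σ j) := mul_le_mul' hhalf (ih j)
        _ = 2⁻¹ ^ (k + 1) * sbb A α σ j := by ring
  -- choice of the scaling ratio r
  have htr : Filter.Tendsto (fun m : ℕ => (1 + 1 / ((m:ℝ) + 1)) ^ p)
      Filter.atTop (nhds 1) := by
    have h0 : Filter.Tendsto (fun m : ℕ => 1 + 1 / ((m:ℝ) + 1)) Filter.atTop (nhds 1) := by
      simpa using (tendsto_const_nhds : Filter.Tendsto (fun _ : ℕ => (1:ℝ)) Filter.atTop (nhds 1)).add tendsto_one_div_add_atTop_nhds_zero_nat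
    simpa using h0.pow p
  obtain ⟨mr, hmr⟩ := (htr.eventually_lt_const (by norm_num : (1:ℝ) < 2)).exists
  set r : ℝ := 1 + 1 / ((mr:ℝ) + 1) with hr
  have hrpos : 0 < 1 / ((mr:ℝ) + 1) := by positivity
  have hr1 : 1 < r := by rw [hr]; linarith
  set R := ENNReal.ofReal r with hR
  have hR1 : 1 ≤ R := by rw [hR, ENNReal.one_le_ofReal]; linarith
  have hRtop : R ≠ ∞ := ENNReal.ofReal_ne_top
  have hRp : R ^ p < 2 := by
    rw [hR, ← ENNReal.ofReal_pow (by linarith)]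
    calc ENNReal.ofReal (r ^ p) < ENNReal.ofReal 2 :=
          (ENNReal.ofReal_lt_ofReal_iff (by norm_num)).2 hmr
      _ = 2 := by norm_num
  set β := α / r with hβ
  have hβ0 : 0 < β := div_pos hα (by linarith)
  have hβα : β < α := div_lt_self hα hr1
  have hαβ : α / β = r := by
    rw [hβ]
    field_simp
  -- scaling bound and grouping by length
  have hscale : ∀ m : List {z : V // z ≠ σ},
      exw A σ β m ≤ R ^ (m.length + 1) * exw A σ α m := by
    intro m
    have h1 := exw_scale hM hd hβ0 hβα.le (γ := α) m
    rwa [hαβ, ← hR] at h1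
  set Tn : ℕ → ℝ≥0∞ :=
    fun n => ∑' m : {m : List {z : V // z ≠ σ} // m.length = n}, exw A σ α m.1 with hTn
  have hgroup : ∑' m : List {z : V // z ≠ σ}, R ^ (m.length + 1) * exw A σ α m
      = ∑' n, R ^ (n + 1) * Tn n := by
    rw [← (Equiv.sigmaFiberEquiv (List.length (α := {z : V // z ≠ σ}))).tsum_eq
      (fun m => R ^ (m.length + 1) * exw A σ α m), ENNReal.tsum_sigma']
    refine tsum_congr fun n => ?_
    rw [hTn, ← ENNReal.tsum_mul_left]
    exact tsum_congr fun m => by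
      simp only [Equiv.sigmaFiberEquiv, Equiv.coe_fn_mk]
      rw [m.2]
  have hGβ : G A σ β ≤ ∑' n, R ^ (n + 1) * Tn n := by
    rw [← hgroup, G]
    exact ENNReal.tsum_le_tsum hscale
  have hTle : ∀ n, Tn n ≤ G A σ α := by
    intro n
    exact ENNReal.summable.tsum_le_tsum_of_inj (fun m => m.1) Subtype.val_injective
      (fun _ _ => zero_le) (fun _ => le_rfl) ENNReal.summable
  set Wb := ∑' q : V × V, tw A α q.1 q.2 with hWb
  have hWble : ∀ a b : V, tw A α a b ≤ Wb := fun a b => ENNReal.le_tsum (a, b)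
  have hWbtop : Wb ≠ ∞ := by
    rw [hWb, tsum_fintype]
    exact (ENNReal.sum_lt_top.2 fun q _ => (tw_ne_top A α q.1 q.2).lt_top).ne
  have hT2 : ∀ n, Tn (n + 2) ≤ Wb * Wb * sbb A α σ n := fun n => Tn_two_le α n Wb hWble
  -- the geometric series bound
  haveI : NeZero p := ⟨Nat.succ_ne_zero n₀⟩
  set q₀ := R ^ p * 2⁻¹ with hq₀def
  have hq₀ : q₀ < 1 := by
    calc R ^ p * 2⁻¹ < 2 * 2⁻¹ :=
          (ENNReal.mul_lt_mul_iff_left (by simp) (by simp)).2 hRp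
      _ = 1 := ENNReal.mul_inv_cancel (by simp) ENNReal.ofNat_ne_top
  have hgeo : ∑' n, R ^ n * sbb A α σ n ≠ ∞ := by
    have key : ∀ (k : ℕ) (j : Fin p),
        R ^ (k * p + j.1) * sbb A α σ (k * p + j.1) ≤ q₀ ^ k * (R ^ p * C) := by
      intro k j
      calc R ^ (k * p + j.1) * sbb A α σ (k * p + j.1)
          ≤ (R ^ p) ^ k * R ^ p * (2⁻¹ ^ k * sbb A α σ j.1) := by
            refine mul_le_mul' ?_ (hdec k j.1)
            rw [pow_add, mul_comm k p, pow_mul]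
            exact mul_le_mul' le_rfl (pow_le_pow_right₀ hR1 j.2.le)
        _ = q₀ ^ k * (R ^ p * sbb A α σ j.1) := by rw [hq₀def, mul_pow]; ring
        _ ≤ q₀ ^ k * (R ^ p * C) := mul_le_mul' le_rfl (mul_le_mul' le_rfl (hCle j.1))
    have heq : ∑' n, R ^ n * sbb A α σ n
        = ∑' q : ℕ × Fin p, R ^ (q.1 * p + q.2.1) * sbb A α σ (q.1 * p + q.2.1) := by
      rw [← (Nat.divModEquiv p).symm.tsum_eq (fun n => R ^ n * sbb A α σ n)]
      exact tsum_congr fun q => by rw [Nat.divModEquiv_symm_apply]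
    rw [heq]
    refine ne_top_of_le_ne_top ?_ (ENNReal.tsum_le_tsum fun q => key q.1 q.2)
    rw [ENNReal.tsum_prod']
    have hinner : ∀ k : ℕ, ∑' _ : Fin p, q₀ ^ k * (R ^ p * C)
        = q₀ ^ k * ((p : ℝ≥0∞) * (R ^ p * C)) := by
      intro k
      rw [tsum_fintype]
      simp [Finset.sum_const, Finset.card_univ, nsmul_eq_mul]
      ring
    rw [tsum_congr hinner, ENNReal.tsum_mul_right, ENNReal.tsum_geometric]
    refine ENNReal.mul_ne_top ?_ ?_
    · exact ENNReal.inv_ne_top.2 (tsub_pos_of_lt hq₀).ne'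
    · refine ENNReal.mul_ne_top (ENNReal.natCast_ne_top _) ?_
      exact ENNReal.mul_ne_top (ENNReal.pow_ne_top hRtop) hsum
  -- assemble
  refine ⟨β, hβ0, hβα, ?_⟩
  refine ne_top_of_le_ne_top ?_ hGβ
  rw [tsum_eq_zero_add' ENNReal.summable, tsum_eq_zero_add' ENNReal.summable]
  refine ENNReal.add_ne_top.2 ⟨?_, ENNReal.add_ne_top.2 ⟨?_, ?_⟩⟩
  · exact ne_top_of_le_ne_top (ENNReal.mul_ne_top (ENNReal.pow_ne_top hRtop) hfin)
      (mul_le_mul' le_rfl (hTle 0))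
  · exact ne_top_of_le_ne_top (ENNReal.mul_ne_top (ENNReal.pow_ne_top hRtop) hfin)
      (mul_le_mul' le_rfl (hTle 1))
  · have hb : ∀ n : ℕ, R ^ (n + 1 + 1 + 1) * Tn (n + 1 + 1)
        ≤ (R ^ 3 * (Wb * Wb)) * (R ^ n * sbb A α σ n) := by
      intro n
      calc R ^ (n + 1 + 1 + 1) * Tn (n + 1 + 1)
          ≤ R ^ (n + 1 + 1 + 1) * (Wb * Wb * sbb A α σ n) := mul_le_mul' le_rfl (hT2 n)
        _ = (R ^ 3 * (Wb * Wb)) * (R ^ n * sbb A α σ n) := by ring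
    refine ne_top_of_le_ne_top ?_ (ENNReal.tsum_le_tsum hb)
    rw [ENNReal.tsum_mul_left]
    refine ENNReal.mul_ne_top ?_ hgeo
    exact ENNReal.mul_ne_top (ENNReal.pow_ne_top hRtop)
      (ENNReal.mul_ne_top hWbtop hWbtop)

end Closed

section Cont
variable {A : Matrix V V ℝ} {σ : V}

noncomputable def rpw (w : V → V → ℝ) : List V → ℝ
  | [] => 1
  | [_] => 1
  | a :: b :: l => max (w a b) 0 * rpw w (b :: l)

lemma rpw_nonneg (w : V → V → ℝ) (l : List V) : 0 ≤ rpw w l := by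
  induction l with
  | nil => norm_num [rpw]
  | cons a l ih =>
    cases l with
    | nil => norm_num [rpw]
    | cons b t => exact mul_nonneg (le_max_right _ _) ih

lemma pw_ofReal (w : V → V → ℝ) (l : List V) :
    pw (fun a b => ENNReal.ofReal (w a b)) l = ENNReal.ofReal (rpw w l) := by
  induction l with
  | nil => simp [rpw]
  | cons a l ih =>
    cases l with
    | nil => simp [rpw]
    | cons b t =>
      rw [pw_cons_cons, ih, rpw, ENNReal.ofReal_mul (le_max_right _ _)]
      congr 1
      rcases le_total (w a b) 0 with h | h
      · rw [max_eq_right h, ENNReal.ofReal_eq_zero.2 h, ENNReal.ofReal_zero]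
      · rw [max_eq_left h]

lemma rpw_contAt (A : Matrix V V ℝ) {γ₀ : ℝ} (h : ∀ x : V, γ₀ - A x x ≠ 0) (l : List V) :
    ContinuousAt (fun γ => rpw (fun x y => A y x / (γ - A x x)) l) γ₀ := by
  induction l with
  | nil => exact continuousAt_const
  | cons a l ih =>
    cases l with
    | nil => exact continuousAt_const
    | cons b t =>
      show ContinuousAt (fun γ => max (A b a / (γ - A a a)) 0 *
        rpw (fun x y => A y x / (γ - A x x)) (b :: t)) γ₀
      exact ((continuousAt_const.div (continuousAt_id.sub continuousAt_const) (h a)).max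
        continuousAt_const).mul ih

end Cont

end ExcAux

open ExcAux in
/-- **Structure of the excursion-weight function.** -/
theorem excursion_weight_structure {V : Type*} [Fintype V] [DecidableEq V] [Nontrivial V]
    (A : Matrix V V ℝ)
    (hMetzler : A.IsMetzler) (hdiag : ∀ σ, A σ σ ≤ 0)
    (hirr : A.IsIrreducibleMetzlerChain) (σ : V) :
    AntitoneOn (fun α : ℝ => excursionWeight A α σ) (Set.Ioi 0) ∧
    (∃ α₀ : ℝ≥0∞, ∀ α : ℝ, 0 < α →
      (excursionWeight A α σ = ∞ ↔ ENNReal.ofReal α ≤ α₀)) ∧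
    StrictAntiOn (fun α : ℝ => (excursionWeight A α σ).toReal)
      {α : ℝ | 0 < α ∧ excursionWeight A α σ < ∞} ∧
    ContinuousOn (fun α : ℝ => (excursionWeight A α σ).toReal)
      {α : ℝ | 0 < α ∧ excursionWeight A α σ < ∞} := by
  classical
  simp only [excursionWeight_eq_G, lt_top_iff_ne_top]
  refine ⟨?_, ?_, ?_, ?_⟩
  · -- antitone
    intro a ha b hb hab
    exact G_anti hMetzler hdiag ha hab
  · -- threshold
    by_cases hne : ∃ γ : ℝ, 0 < γ ∧ G A σ γ ≠ ∞
    · set S : Set ℝ := {γ : ℝ | 0 < γ ∧ G A σ γ ≠ ∞} with hS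
      have hSne : S.Nonempty := hne
      have hbdd : BddBelow S := ⟨0, fun γ hγ => hγ.1.le⟩
      set c := sInf S with hc
      have hc0 : 0 ≤ c := le_csInf hSne fun γ hγ => hγ.1.le
      have hmem_gt : ∀ α : ℝ, c < α → G A σ α ≠ ∞ := by
        intro α hcα
        obtain ⟨γ, hγS, hγα⟩ := exists_lt_of_csInf_lt hSne hcα
        exact ne_top_of_le_ne_top hγS.2 (G_anti hMetzler hdiag hγS.1 hγα.le)
      have hinf_le : ∀ α : ℝ, 0 < α → α ≤ c → G A σ α = ∞ := by
        intro α hα hαc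
        rcases eq_or_lt_of_le hαc with rfl | hlt
        · by_contra hfin
          obtain ⟨β, hβ0, hβα, hβfin⟩ :=
            exists_lt_of_G_ne_top hMetzler hdiag hirr hα hfin
          exact absurd (csInf_le hbdd ⟨hβ0, hβfin⟩) (not_le.2 hβα)
        · by_contra hfin
          exact absurd (csInf_le hbdd ⟨hα, hfin⟩) (not_le.2 hlt)
      refine ⟨ENNReal.ofReal c, fun α hα => ⟨fun h => ?_, fun h => ?_⟩⟩
      · refine ENNReal.ofReal_le_ofReal ?_
        by_contra hlt
        exact hmem_gt α (not_le.1 hlt) h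
      · exact hinf_le α hα ((ENNReal.ofReal_le_ofReal_iff hc0).1 h)
    · push_neg at hne
      exact ⟨∞, fun α hα => ⟨fun _ => le_top, fun _ => hne α hα⟩⟩
  · -- strict antitone
    intro a ha b hb hab
    set d₀ := Finset.univ.inf' Finset.univ_nonempty (fun x : V => A x x) with hd₀def
    have hd₀ : ∀ x : V, d₀ ≤ A x x := fun x => Finset.inf'_le _ (Finset.mem_univ x)
    have hd₀0 : d₀ ≤ 0 := le_trans (hd₀ σ) (hdiag σ)
    set k := (b - d₀) / (a - d₀) with hk
    have hk1 : 1 < k := by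
      rw [hk, lt_div_iff₀ (by linarith [ha.1])]
      linarith [ha.1]
    have hstr := G_strict (σ := σ) hMetzler hdiag ha.1 hab.le hd₀
    have hGb_pos : 0 < G A σ b := G_pos hdiag hirr (lt_trans ha.1 hab)
    have h1 : (ENNReal.ofReal k * G A σ b).toReal = k * (G A σ b).toReal := by
      rw [ENNReal.toReal_mul, ENNReal.toReal_ofReal (by linarith)]
    have h2 : (ENNReal.ofReal k * G A σ b).toReal ≤ (G A σ a).toReal :=
      ENNReal.toReal_mono ha.2 hstr
    have h3 : 0 < (G A σ b).toReal := ENNReal.toReal_pos hGb_pos.ne' hb.2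
    rw [h1] at h2
    nlinarith
  · -- continuity
    intro α₂ hα₂
    obtain ⟨β₀, hβ₀0, hβ₀α, hβ₀fin⟩ :=
      exists_lt_of_G_ne_top hMetzler hdiag hirr hα₂.1 hα₂.2
    set fm : List {z : V // z ≠ σ} → ℝ → ℝ := fun m γ =>
      rpw (fun x y => A y x / (γ - A x x)) (σ :: m.map Subtype.val ++ [σ]) with hfm
    have hexw : ∀ (γ : ℝ) (m : List {z : V // z ≠ σ}),
        exw A σ γ m = ENNReal.ofReal (fm m γ) := by
      intro γ m
      rw [exw, hfm]
      exact pw_ofReal _ _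
    have hcont : ∀ m, ContinuousOn (fm m) (Set.Ioi β₀) := by
      intro m
      intro γ hγ
      have hγ0 : 0 < γ := lt_trans hβ₀0 hγ
      refine (rpw_contAt A (fun x => ?_) _).continuousWithinAt
      have := hdiag x
      intro hzero
      nlinarith [hdiag x]
    have hsummable : Summable fun m : List {z : V // z ≠ σ} => (exw A σ β₀ m).toReal :=
      ENNReal.summable_toReal hβ₀fin
    have hfu : ∀ (m : List {z : V // z ≠ σ}), ∀ γ ∈ Set.Ioi β₀,
        ‖fm m γ‖ ≤ (exw A σ β₀ m).toReal := by
      intro m γ hγ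
      have h0 : 0 ≤ fm m γ := rpw_nonneg _ _
      rw [Real.norm_of_nonneg h0]
      have h1 : exw A σ γ m ≤ exw A σ β₀ m := exw_anti hMetzler hdiag hβ₀0 (le_of_lt hγ) m
      have h2 := ENNReal.toReal_mono (pw_ne_top (fun a b => tw_ne_top A β₀ a b) _) h1
      rw [hexw γ m, ENNReal.toReal_ofReal h0] at h2
      exact h2
    have hcontsum : ContinuousOn (fun γ => ∑' m, fm m γ) (Set.Ioi β₀) :=
      continuousOn_tsum hcont hsummable hfu
    have h5 : ContinuousAt (fun γ => ∑' m, fm m γ) α₂ :=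
      hcontsum.continuousAt (Ioi_mem_nhds hβ₀α)
    have h6 : (fun γ => (G A σ γ).toReal) =ᶠ[nhds α₂] (fun γ => ∑' m, fm m γ) := by
      filter_upwards [Ioi_mem_nhds hβ₀α] with γ hγ
      rw [G, ENNReal.tsum_toReal_eq (fun m => by
        rw [hexw γ m]; exact ENNReal.ofReal_ne_top)]
      refine tsum_congr fun m => ?_
      rw [hexw γ m, ENNReal.toReal_ofReal (rpw_nonneg _ _)]
    exact ((h5.congr h6.symm)).continuousWithinAt
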